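/- Fix reals L > 0, M > 0 and ν ∈ (0,1) with M > L·(1−ν). For a real N > 0 set λ = L/N and τ = M/N, and define Ŝ(N) = −λ·log λ − (1−λ)·log(1−λ) and Î(N) = λ(1−ν)·log((1−ν)/τ) + λν·log(ν/(1−τ)) + (τ − λ(1−ν))·log( (τ − λ(1−ν)) / ((1−λ)τ) ) + (1 − τ − λν)·log( (1 − τ − λν) / ((1−λ)(1−τ)) ). Then the information efficiency r̂(N) = Î(N)/Ŝ(N) converges to 1 − ν as N → ∞. -/

import Mathlib

open Filter Real

private lemma inv_log_tendsto :
    Tendsto (fun x : ℝ => (Real.log x)⁻¹) (nhdsWithin 0 (Set.Ioi 0)) (nhds 0) := by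
  have h1 : Tendsto (fun x : ℝ => -Real.log x) (nhdsWithin 0 (Set.Ioi 0)) atTop :=
    tendsto_neg_atBot_atTop.comp Real.tendsto_log_nhdsGT_zero
  have h2 := h1.inv_tendsto_atTop
  have h3 := h2.neg
  refine h3.congr' (by filter_upwards with x; simp [Pi.inv_apply, inv_neg]) |>.mono_right (by simp)

private lemma ratio_log (a b : ℝ) :
    Tendsto (fun x : ℝ => (a + b * Real.log x) / Real.log x) (nhdsWithin 0 (Set.Ioi 0)) (nhds b) := by
  have h : Tendsto (fun x : ℝ => a * (Real.log x)⁻¹ + b) (nhdsWithin 0 (Set.Ioi 0)) (nhds b) := by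
    have := (inv_log_tendsto.const_mul a).add_const b
    simpa using this
  refine h.congr' ?_
  filter_upwards [Ioo_mem_nhdsGT_of_mem (by norm_num : (0:ℝ) ∈ Set.Ico 0 1)] with x hx
  have hlog : Real.log x ≠ 0 := ne_of_lt (Real.log_neg hx.1 hx.2)
  field_simp

private lemma slope_log (c : ℝ) :
    Tendsto (fun x : ℝ => Real.log (1 - c * x) / x) (nhdsWithin 0 (Set.Ioi 0)) (nhds (-c)) := by
  have hd : HasDerivAt (fun x : ℝ => Real.log (1 - c * x)) (-c) 0 := by
    have h1 : HasDerivAt (fun x : ℝ => 1 - c * x) (-c) 0 := by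
      simpa using ((hasDerivAt_id (0:ℝ)).const_mul c).const_sub 1
    have h2 : HasDerivAt Real.log ((1:ℝ) - c * 0)⁻¹ (1 - c * 0) :=
      Real.hasDerivAt_log (by norm_num)
    have := h2.comp 0 h1
    simpa [Function.comp_def] using this
  have h := (hasDerivAt_iff_tendsto_slope.mp hd).mono_left
    (nhdsWithin_mono _ fun x hx => ne_of_gt hx)
  refine h.congr' ?_
  filter_upwards [self_mem_nhdsWithin] with x hx
  simp [slope_def_field, div_eq_mul_inv]

private lemma dlog (c : ℝ) :
    Tendsto (fun x : ℝ => Real.log (1 - c * x) / (x * Real.log x))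
      (nhdsWithin 0 (Set.Ioi 0)) (nhds 0) := by
  have h := (slope_log c).mul inv_log_tendsto
  rw [mul_zero] at h
  refine h.congr fun x => ?_
  rw [div_mul_eq_div_div, div_eq_mul_inv (Real.log (1 - c * x) / x)]

private lemma div_div_cancel_aux (a b c : ℝ) (hc : c ≠ 0) : (a / c) / (b / c) = a / b := by
  rcases eq_or_ne b 0 with rfl | hb
  · simp
  · field_simp

open Filter in
/-- In the binary-alarm setting with a fixed number `L` of event cells, a fixed number
`M` of alarmed cells and a fixed share `ν` of missed targets, the information efficiency
`r̂ = Î/Ŝ` converges to `1 - ν` as the total number of cells `N` tends to infinity. -/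
theorem efficiency_tendsto_one_sub_nu (L M ν : ℝ)
    (hL : 0 < L) (hM : 0 < M) (hν : ν ∈ Set.Ioo (0 : ℝ) 1)
    (hML : L * (1 - ν) < M) :
    Tendsto
      (fun N : ℝ =>
        (((L / N) * (1 - ν)) * Real.log ((1 - ν) / (M / N))
            + ((L / N) * ν) * Real.log (ν / (1 - M / N))
            + (M / N - (L / N) * (1 - ν)) *
                Real.log ((M / N - (L / N) * (1 - ν)) / ((1 - L / N) * (M / N)))
            + (1 - M / N - (L / N) * ν) *
                Real.log ((1 - M / N - (L / N) * ν) / ((1 - L / N) * (1 - M / N))))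
          / (-((L / N) * Real.log (L / N)) - (1 - L / N) * Real.log (1 - L / N)))
      atTop (nhds (1 - ν)) := by
  obtain ⟨hν0, hν1⟩ := hν
  set l := nhdsWithin (0:ℝ) (Set.Ioi 0) with hl
  set A : ℝ → ℝ := fun x => ((L * x) * (1 - ν)) * Real.log ((1 - ν) / (M * x)) with hA
  set B : ℝ → ℝ := fun x => ((L * x) * ν) * Real.log (ν / (1 - M * x)) with hB
  set C : ℝ → ℝ := fun x => (M * x - (L * x) * (1 - ν)) *
      Real.log ((M * x - (L * x) * (1 - ν)) / ((1 - L * x) * (M * x))) with hC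
  set D : ℝ → ℝ := fun x => (1 - M * x - (L * x) * ν) *
      Real.log ((1 - M * x - (L * x) * ν) / ((1 - L * x) * (1 - M * x))) with hD
  set Den : ℝ → ℝ := fun x =>
      -((L * x) * Real.log (L * x)) - (1 - L * x) * Real.log (1 - L * x) with hDen
  -- small-x neighbourhood facts
  have hδpos : (0:ℝ) < min 1 (L + M)⁻¹ := by positivity
  have hsmall : ∀ᶠ x : ℝ in l, x ∈ Set.Ioo 0 (min 1 (L + M)⁻¹) :=
    Ioo_mem_nhdsGT_of_mem ⟨le_rfl, hδpos⟩
  have hfacts : ∀ x : ℝ, x ∈ Set.Ioo 0 (min 1 (L + M)⁻¹) →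
      0 < x ∧ Real.log x ≠ 0 ∧ 0 < 1 - L * x ∧ 0 < 1 - M * x ∧ 0 < 1 - M * x - L * x * ν := by
    intro x hx
    obtain ⟨hx0, hxδ⟩ := hx
    have hx1 : x < 1 := lt_of_lt_of_le hxδ (min_le_left _ _)
    have hxLM : (L + M) * x < 1 := by
      have hlt := lt_of_lt_of_le hxδ (min_le_right _ _)
      have hLM : (0:ℝ) < L + M := by linarith
      calc (L + M) * x < (L + M) * (L + M)⁻¹ := by
            exact mul_lt_mul_of_pos_left hlt hLM
        _ = 1 := mul_inv_cancel₀ hLM.ne'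
    refine ⟨hx0, ne_of_lt (Real.log_neg hx0 hx1), by nlinarith, by nlinarith, by nlinarith⟩
  -- Term A
  have TA : Tendsto (fun x => A x / (x * Real.log x)) l (nhds (-(L * (1 - ν)))) := by
    have h := (ratio_log (Real.log (1 - ν) - Real.log M) (-1)).const_mul (L * (1 - ν))
    rw [show L * (1 - ν) * (-1) = -(L * (1 - ν)) by ring] at h
    refine h.congr' ?_
    filter_upwards [hsmall] with x hx
    obtain ⟨hx0, hlx, h1L, h1M, h1MLν⟩ := hfacts x hx
    simp only [hA]
    rw [Real.log_div (by linarith) (by positivity), Real.log_mul hM.ne' hx0.ne']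
    field_simp
    ring
  -- Term B
  have TB : Tendsto (fun x => B x / (x * Real.log x)) l (nhds 0) := by
    have hc : Tendsto (fun x : ℝ => (L * ν) * Real.log (ν / (1 - M * x))) l
        (nhds ((L * ν) * Real.log (ν / (1 - M * 0)))) := by
      refine Tendsto.mono_left ?_ nhdsWithin_le_nhds
      exact (ContinuousAt.mul continuousAt_const
        ((ContinuousAt.div continuousAt_const (by fun_prop) (by norm_num)).log
          (by norm_num [hν0.ne']))).tendsto
    have h := hc.mul inv_log_tendsto
    rw [mul_zero] at h
    refine h.congr' ?_
    filter_upwards [hsmall] with x hx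
    obtain ⟨hx0, hlx, h1L, h1M, h1MLν⟩ := hfacts x hx
    simp only [hB]
    field_simp
  -- Term C
  have TC : Tendsto (fun x => C x / (x * Real.log x)) l (nhds 0) := by
    have hc : Tendsto (fun x : ℝ => (M - L * (1 - ν)) *
        Real.log ((M - L * (1 - ν)) / ((1 - L * x) * M))) l
        (nhds ((M - L * (1 - ν)) *
          Real.log ((M - L * (1 - ν)) / ((1 - L * 0) * M)))) := by
      refine Tendsto.mono_left ?_ nhdsWithin_le_nhds
      refine (ContinuousAt.mul continuousAt_const
        ((ContinuousAt.div continuousAt_const (by fun_prop) (by norm_num [hM.ne'])).log ?_)).tendsto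
      have h0 : (0:ℝ) < M - L * (1 - ν) := by linarith
      show (M - L * (1 - ν)) / ((1 - L * 0) * M) ≠ 0
      rw [mul_zero, sub_zero, one_mul]
      exact (div_pos h0 hM).ne'
    have h := hc.mul inv_log_tendsto
    rw [mul_zero] at h
    refine h.congr' ?_
    filter_upwards [hsmall] with x hx
    obtain ⟨hx0, hlx, h1L, h1M, h1MLν⟩ := hfacts x hx
    simp only [hC]
    have harg : (M * x - (L * x) * (1 - ν)) / ((1 - L * x) * (M * x))
        = (M - L * (1 - ν)) / ((1 - L * x) * M) := by
      field_simp
    rw [harg]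
    field_simp
  -- Term D
  have TD : Tendsto (fun x => D x / (x * Real.log x)) l (nhds 0) := by
    have hc : Tendsto (fun x : ℝ => (1 - M * x - (L * x) * ν)) l (nhds 1) := by
      have : Tendsto (fun x : ℝ => (1 - M * x - (L * x) * ν)) (nhds 0)
          (nhds (1 - M * 0 - (L * 0) * ν)) := (by fun_prop : Continuous _).continuousAt.tendsto
      simpa using this.mono_left nhdsWithin_le_nhds
    have hsum : Tendsto (fun x : ℝ =>
        Real.log (1 - (M + L * ν) * x) / (x * Real.log x)
        - Real.log (1 - L * x) / (x * Real.log x)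
        - Real.log (1 - M * x) / (x * Real.log x)) l (nhds 0) := by
      have := ((dlog (M + L * ν)).sub (dlog L)).sub (dlog M)
      simpa using this
    have h := hc.mul hsum
    rw [mul_zero] at h
    refine h.congr' ?_
    filter_upwards [hsmall] with x hx
    obtain ⟨hx0, hlx, h1L, h1M, h1MLν⟩ := hfacts x hx
    simp only [hD]
    have hrw : (1:ℝ) - (M + L * ν) * x = 1 - M * x - (L * x) * ν := by ring
    rw [hrw]
    rw [Real.log_div h1MLν.ne' (by positivity), Real.log_mul h1L.ne' h1M.ne']
    ring
  -- Denominator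
  have TDen : Tendsto (fun x => Den x / (x * Real.log x)) l (nhds (-L)) := by
    have h1 := (ratio_log (Real.log L) 1).const_mul (-L)
    have h2 : Tendsto (fun x : ℝ => (1 - L * x) * (Real.log (1 - L * x) / (x * Real.log x)))
        l (nhds 0) := by
      have hc : Tendsto (fun x : ℝ => (1 - L * x)) l (nhds 1) := by
        have : Tendsto (fun x : ℝ => (1 - L * x)) (nhds 0) (nhds (1 - L * 0)) :=
          (by fun_prop : Continuous _).continuousAt.tendsto
        simpa using this.mono_left nhdsWithin_le_nhds
      simpa using hc.mul (dlog L)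
    have h := h1.sub h2
    rw [show -L * 1 - 0 = -L by ring] at h
    refine h.congr' ?_
    filter_upwards [hsmall] with x hx
    obtain ⟨hx0, hlx, h1L, h1M, h1MLν⟩ := hfacts x hx
    simp only [hDen]
    rw [Real.log_mul hL.ne' hx0.ne']
    field_simp
  -- Numerator
  have TNum : Tendsto (fun x => (A x + B x + C x + D x) / (x * Real.log x)) l
      (nhds (-(L * (1 - ν)))) := by
    have h := ((TA.add TB).add TC).add TD
    rw [show -(L * (1 - ν)) + 0 + 0 + 0 = -(L * (1 - ν)) by ring] at h
    refine h.congr fun x => ?_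
    rw [add_div, add_div, add_div]
  -- Ratio
  have key : Tendsto (fun x => (A x + B x + C x + D x) / Den x) l (nhds (1 - ν)) := by
    have h := TNum.div TDen (by simpa using hL.ne')
    have hval : -(L * (1 - ν)) / (-L) = 1 - ν := by
      field_simp
    rw [hval] at h
    refine h.congr' ?_
    filter_upwards [hsmall] with x hx
    obtain ⟨hx0, hlx, h1L, h1M, h1MLν⟩ := hfacts x hx
    have hc : x * Real.log x ≠ 0 := mul_ne_zero hx0.ne' hlx
    rw [Pi.div_apply]
    exact div_div_cancel_aux _ _ _ hc
  -- compose with 1/N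
  have hcomp : Tendsto (fun N : ℝ => N⁻¹) atTop l := by
    refine tendsto_nhdsWithin_of_tendsto_nhds_of_eventually_within _ tendsto_inv_atTop_zero ?_
    filter_upwards [eventually_gt_atTop (0:ℝ)] with N hN
    exact inv_pos.mpr hN
  have hfinal := key.comp hcomp
  refine hfinal.congr fun N => ?_
  simp only [Function.comp, hA, hB, hC, hD, hDen, div_eq_mul_inv]
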